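/- Complete growth series of a free product: Let G and H be groups with finite symmetric generating sets S and T respectively, and equip the free product G ∗ H with the finite symmetric generating set consisting of the images of S and of T under the canonical inclusions. Each of the power series CG_{G∗H}(z), ι_G(CG_{G,S}(z)) and ι_H(CG_{H,T}(z)) has constant coefficient 1 and hence is a unit of the power series ring (ℤ[G∗H])[[z]], and they satisfy CG_{G∗H}(z)⁻¹ = ι_G(CG_{G,S}(z))⁻¹ + ι_H(CG_{H,T}(z))⁻¹ − 1, where ι_G and ι_H denote the maps on power series induced coefficientwise by the ring homomorphisms ℤ[G] → ℤ[G∗H] and ℤ[H] → ℤ[G∗H] coming from the canonical inclusions G → G∗H and H → G∗H. -/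

import Mathlib

/-- The word norm of `g` with respect to a generating set `S`. -/
noncomputable def wordNorm {G : Type*} [Group G] (S : Set G) (g : G) : ℕ :=
  sInf {n | ∃ l : List G, (∀ s ∈ l, s ∈ S) ∧ l.length = n ∧ l.prod = g}

/-- The complete growth series `CG_{G,S}(z) ∈ (ℤ[G])[[z]]`: the coefficient of `z^n`
is the sum `Σ_{‖g‖_S = n} g` in the group ring `ℤ[G]`. -/
noncomputable def completeGrowthSeries {G : Type*} [Group G] (S : Set G) :
    PowerSeries (MonoidAlgebra ℤ G) :=
  PowerSeries.mk fun n => ∑ᶠ g ∈ {g : G | wordNorm S g = n}, MonoidAlgebra.of ℤ G g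

namespace CGFP

variable {G : Type*} [Group G]

/-- `x` is representable as a product of `n` elements of `S`. -/
def IsRep (S : Set G) (x : G) (n : ℕ) : Prop :=
  ∃ l : List G, (∀ s ∈ l, s ∈ S) ∧ l.length = n ∧ l.prod = x

/-- `x` is representable as a product of elements of `S`. -/
def Ach (S : Set G) (x : G) : Prop := ∃ n, IsRep S x n

theorem wordNorm_eq (S : Set G) (x : G) : wordNorm S x = sInf {n | IsRep S x n} := rfl

theorem isRep_one (S : Set G) : IsRep S (1 : G) 0 := ⟨[], by simp⟩

theorem wordNorm_le {S : Set G} {x : G} {n : ℕ} (h : IsRep S x n) : wordNorm S x ≤ n :=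
  Nat.sInf_le h

theorem wordNorm_one (S : Set G) : wordNorm S (1 : G) = 0 :=
  Nat.le_zero.1 (wordNorm_le (isRep_one S))

theorem isRep_wordNorm {S : Set G} {x : G} (h : Ach S x) : IsRep S x (wordNorm S x) :=
  Nat.sInf_mem h

theorem isRep_mul {S : Set G} {x y : G} {n m : ℕ} (hx : IsRep S x n) (hy : IsRep S y m) :
    IsRep S (x * y) (n + m) := by
  obtain ⟨l, hl, hln, hlp⟩ := hx
  obtain ⟨l', hl', hln', hlp'⟩ := hy
  exact ⟨l ++ l', by intro s hs; rcases List.mem_append.1 hs with h | h; exacts [hl s h, hl' s h],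
    by simp [hln, hln'], by simp [hlp, hlp']⟩

theorem ach_mul {S : Set G} {x y : G} (hx : Ach S x) (hy : Ach S y) : Ach S (x * y) := by
  obtain ⟨n, hn⟩ := hx; obtain ⟨m, hm⟩ := hy; exact ⟨n + m, isRep_mul hn hm⟩

theorem wordNorm_mul_le {S : Set G} {x y : G} (hx : Ach S x) (hy : Ach S y) :
    wordNorm S (x * y) ≤ wordNorm S x + wordNorm S y :=
  wordNorm_le (isRep_mul (isRep_wordNorm hx) (isRep_wordNorm hy))

theorem isRep_mem {S : Set G} {s : G} (h : s ∈ S) : IsRep S s 1 := ⟨[s], by simp [h]⟩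

theorem wordNorm_le_one {S : Set G} {s : G} (h : s ∈ S) : wordNorm S s ≤ 1 :=
  wordNorm_le (isRep_mem h)

theorem ach_mem {S : Set G} {s : G} (h : s ∈ S) : Ach S s := ⟨1, isRep_mem h⟩

theorem eq_one_of_wordNorm_eq_zero {S : Set G} {x : G} (hach : Ach S x)
    (h : wordNorm S x = 0) : x = 1 := by
  obtain ⟨l, _, hln, hlp⟩ := isRep_wordNorm hach
  rw [h] at hln
  rw [← hlp, List.length_eq_zero_iff.1 hln, List.prod_nil]

theorem ach_of_gen {S : Set G} (hsym : S⁻¹ = S) (hgen : Subgroup.closure S = ⊤) (x : G) :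
    Ach S x := by
  have hx : x ∈ (Subgroup.closure S).toSubmonoid := by rw [hgen]; trivial
  rw [Subgroup.closure_toSubmonoid, hsym, Set.union_self] at hx
  obtain ⟨l, hl, hlp⟩ := Submonoid.exists_list_of_mem_closure hx
  exact ⟨l.length, l, hl, rfl, hlp⟩

theorem finite_wordNorm_eq {S : Set G} (hS : S.Finite) (hach : ∀ x : G, Ach S x) (n : ℕ) :
    {x : G | wordNorm S x = n}.Finite := by
  have : Finite S := hS.to_subtype
  apply Set.Finite.subset (Set.finite_range
    (fun f : Fin n → S => (List.ofFn (fun i => (f i : G))).prod))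
  rintro x hx
  obtain ⟨l, hl, hln, hlp⟩ := isRep_wordNorm (hach x)
  rw [hx] at hln
  subst hln
  refine ⟨fun i => ⟨l.get i, hl _ (l.get_mem _)⟩, ?_⟩
  simp only []
  rw [List.ofFn_get]
  exact hlp

end CGFP
open Monoid Monoid.Coprod

set_option linter.unusedSectionVars false
namespace CGFP

attribute [local instance] Classical.propDecidable

variable {G H : Type*} [Group G] [Group H]

/-- A letter is an element of `G` or of `H`. -/
abbrev Letter (G H : Type*) := G ⊕ H

/-- Interpret a letter in the free product. -/
def mkL : Letter G H → Coprod G H := Sum.elim inl inr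

/-- A letter is nontrivial. -/
def okL : Letter G H → Prop := Sum.elim (· ≠ 1) (· ≠ 1)

@[simp] theorem okL_inl {g : G} : okL (Sum.inl g : Letter G H) ↔ g ≠ 1 := Iff.rfl
@[simp] theorem okL_inr {h : H} : okL (Sum.inr h : Letter G H) ↔ h ≠ 1 := Iff.rfl

/-- Two letters come from different factors. -/
def altL (a b : Letter G H) : Prop := a.isLeft = !b.isLeft

/-- A reduced word: all letters nontrivial and alternating. -/
def Red (l : List (Letter G H)) : Prop := (∀ a ∈ l, okL a) ∧ l.Chain' altL

theorem Red.nil : Red ([] : List (Letter G H)) := ⟨by simp, by simp [List.Chain']⟩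

theorem Red.tail {a : Letter G H} {t : List (Letter G H)} (h : Red (a :: t)) : Red t :=
  ⟨fun b hb => h.1 b (List.mem_cons_of_mem _ hb), (List.isChain_cons.1 h.2).2⟩

theorem tail_shape_inl {g' : G} {t : List (Letter G H)}
    (h : List.Chain' altL (Sum.inl g' :: t)) : t = [] ∨ ∃ x t', t = Sum.inr x :: t' := by
  match t with
  | [] => exact Or.inl rfl
  | Sum.inl a :: t' =>
    exact absurd (List.isChain_cons_cons.1 h).1 (by simp [altL])
  | Sum.inr a :: t' => exact Or.inr ⟨a, t', rfl⟩

theorem tail_shape_inr {h' : H} {t : List (Letter G H)}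
    (h : List.Chain' altL (Sum.inr h' :: t)) : t = [] ∨ ∃ x t', t = Sum.inl x :: t' := by
  match t with
  | [] => exact Or.inl rfl
  | Sum.inr a :: t' =>
    exact absurd (List.isChain_cons_cons.1 h).1 (by simp [altL])
  | Sum.inl a :: t' => exact Or.inr ⟨a, t', rfl⟩

/-- The product of a word in the free product. -/
def prodL (l : List (Letter G H)) : Coprod G H := (l.map mkL).prod

@[simp] theorem prodL_nil : prodL ([] : List (Letter G H)) = 1 := rfl

@[simp] theorem prodL_cons (a : Letter G H) (t : List (Letter G H)) :
    prodL (a :: t) = mkL a * prodL t := by simp [prodL]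

/-- Prepend `g ∈ G` to a reduced word, reducing. -/
noncomputable def consG (g : G) : List (Letter G H) → List (Letter G H)
  | [] => if g = 1 then [] else [Sum.inl g]
  | Sum.inl g' :: t => if g * g' = 1 then t else Sum.inl (g * g') :: t
  | Sum.inr h :: t => if g = 1 then Sum.inr h :: t else Sum.inl g :: Sum.inr h :: t

/-- Prepend `h ∈ H` to a reduced word, reducing. -/
noncomputable def consH (h : H) : List (Letter G H) → List (Letter G H)
  | [] => if h = 1 then [] else [Sum.inr h]
  | Sum.inr h' :: t => if h * h' = 1 then t else Sum.inr (h * h') :: t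
  | Sum.inl g :: t => if h = 1 then Sum.inl g :: t else Sum.inr h :: Sum.inl g :: t

theorem consG_nil_or_inr {t : List (Letter G H)}
    (ht : t = [] ∨ ∃ x t', t = Sum.inr x :: t') (g : G) :
    consG g t = if g = 1 then t else Sum.inl g :: t := by
  rcases ht with rfl | ⟨x, t', rfl⟩ <;> simp [consG]

theorem consH_nil_or_inl {t : List (Letter G H)}
    (ht : t = [] ∨ ∃ x t', t = Sum.inl x :: t') (h : H) :
    consH h t = if h = 1 then t else Sum.inr h :: t := by
  rcases ht with rfl | ⟨x, t', rfl⟩ <;> simp [consH]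

theorem consG_one {l : List (Letter G H)} (hl : Red l) : consG 1 l = l := by
  match l with
  | [] => simp [consG]
  | Sum.inl g' :: t =>
    have hg : g' ≠ 1 := by simpa using hl.1 (Sum.inl g') (by simp)
    simp [consG, hg]
  | Sum.inr h :: t => simp [consG]

theorem consH_one {l : List (Letter G H)} (hl : Red l) : consH 1 l = l := by
  match l with
  | [] => simp [consH]
  | Sum.inr h' :: t =>
    have hg : h' ≠ 1 := by simpa using hl.1 (Sum.inr h') (by simp)
    simp [consH, hg]
  | Sum.inl g :: t => simp [consH]

theorem chain'_head_congr {a a' : Letter G H} (h : a.isLeft = a'.isLeft)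
    {t : List (Letter G H)} (hc : List.Chain' altL (a :: t)) :
    List.Chain' altL (a' :: t) := by
  match t with
  | [] => simp [List.Chain']
  | b :: t' =>
    rcases List.isChain_cons_cons.1 hc with ⟨h1, h2⟩
    exact List.isChain_cons_cons.2 ⟨by rwa [altL, ← h], h2⟩

theorem Red.consG (g : G) {l : List (Letter G H)} (hl : Red l) : Red (consG g l) := by
  match l with
  | [] =>
    by_cases hg : g = 1 <;> simp [CGFP.consG, hg, Red, okL, altL, List.Chain']
  | Sum.inl g' :: t =>
    by_cases hgg : g * g' = 1
    · simpa [CGFP.consG, hgg] using hl.tail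
    · constructor
      · intro a ha
        simp only [CGFP.consG, if_neg hgg] at ha
        rcases List.mem_cons.1 ha with rfl | ha
        · simpa using hgg
        · exact hl.1 a (List.mem_cons_of_mem _ ha)
      · simp only [CGFP.consG, if_neg hgg]
        exact chain'_head_congr (by simp) hl.2
  | Sum.inr h :: t =>
    by_cases hg : g = 1
    · simpa [CGFP.consG, hg] using hl
    · constructor
      · intro a ha
        simp only [CGFP.consG, if_neg hg] at ha
        rcases List.mem_cons.1 ha with rfl | ha
        · simpa using hg
        · exact hl.1 a ha
      · simp only [CGFP.consG, if_neg hg]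
        exact List.isChain_cons_cons.2 ⟨by simp [altL], hl.2⟩

theorem Red.consH (h : H) {l : List (Letter G H)} (hl : Red l) : Red (consH h l) := by
  match l with
  | [] =>
    by_cases hg : h = 1 <;> simp [CGFP.consH, hg, Red, okL, altL, List.Chain']
  | Sum.inr h' :: t =>
    by_cases hgg : h * h' = 1
    · simpa [CGFP.consH, hgg] using hl.tail
    · constructor
      · intro a ha
        simp only [CGFP.consH, if_neg hgg] at ha
        rcases List.mem_cons.1 ha with rfl | ha
        · simpa using hgg
        · exact hl.1 a (List.mem_cons_of_mem _ ha)
      · simp only [CGFP.consH, if_neg hgg]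
        exact chain'_head_congr (by simp) hl.2
  | Sum.inl g :: t =>
    by_cases hg : h = 1
    · simpa [CGFP.consH, hg] using hl
    · constructor
      · intro a ha
        simp only [CGFP.consH, if_neg hg] at ha
        rcases List.mem_cons.1 ha with rfl | ha
        · simpa using hg
        · exact hl.1 a ha
      · simp only [CGFP.consH, if_neg hg]
        exact List.isChain_cons_cons.2 ⟨by simp [altL], hl.2⟩

theorem consG_mul (g₁ g₂ : G) {l : List (Letter G H)} (hl : Red l) :
    consG (g₁ * g₂) l = consG g₁ (consG g₂ l) := by
  match l with
  | [] =>
    by_cases h2 : g₂ = 1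
    · subst h2; rw [mul_one]
      by_cases h1 : g₁ = 1 <;> simp [consG, h1]
    · by_cases h12 : g₁ * g₂ = 1 <;> simp [consG, h2, h12]
  | Sum.inl g' :: t =>
    by_cases h2 : g₂ * g' = 1
    · have hg1 : g₁ * g₂ * g' = g₁ := by rw [mul_assoc, h2, mul_one]
      rw [show consG g₂ (Sum.inl g' :: t) = t by simp [consG, h2],
        consG_nil_or_inr (tail_shape_inl hl.2) g₁]
      simp only [consG, hg1]
      try by_cases h1 : g₁ = 1 <;> simp [h1]
    · have h12 : g₁ * g₂ * g' = g₁ * (g₂ * g') := mul_assoc _ _ _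
      simp only [consG, if_neg h2, h12]
  | Sum.inr h :: t =>
    by_cases h2 : g₂ = 1
    · subst h2; rw [mul_one]; simp [consG]
    · simp only [consG, if_neg h2]
      try by_cases h12 : g₁ * g₂ = 1 <;> simp [consG, h12]

theorem consH_mul (h₁ h₂ : H) {l : List (Letter G H)} (hl : Red l) :
    consH (h₁ * h₂) l = consH h₁ (consH h₂ l) := by
  match l with
  | [] =>
    by_cases h2 : h₂ = 1
    · subst h2; rw [mul_one]
      by_cases h1 : h₁ = 1 <;> simp [consH, h1]
    · by_cases h12 : h₁ * h₂ = 1 <;> simp [consH, h2, h12]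
  | Sum.inr h' :: t =>
    by_cases h2 : h₂ * h' = 1
    · have hg1 : h₁ * h₂ * h' = h₁ := by rw [mul_assoc, h2, mul_one]
      rw [show consH h₂ (Sum.inr h' :: t) = t by simp [consH, h2],
        consH_nil_or_inl (tail_shape_inr hl.2) h₁]
      simp only [consH, hg1]
      try by_cases h1 : h₁ = 1 <;> simp [h1]
    · have h12 : h₁ * h₂ * h' = h₁ * (h₂ * h') := mul_assoc _ _ _
      simp only [consH, if_neg h2, h12]
  | Sum.inl g :: t =>
    by_cases h2 : h₂ = 1
    · subst h2; rw [mul_one]; simp [consH]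
    · simp only [consH, if_neg h2]
      try by_cases h12 : h₁ * h₂ = 1 <;> simp [consH, h12]

theorem prodL_consG (g : G) (l : List (Letter G H)) :
    prodL (consG g l) = inl g * prodL l := by
  match l with
  | [] =>
    by_cases hg : g = 1 <;> simp [consG, hg, mkL]
  | Sum.inl g' :: t =>
    by_cases hgg : g * g' = 1
    · have : (inl g : Coprod G H) * inl g' = 1 := by rw [← map_mul, hgg, map_one]
      simp [consG, hgg, mkL, ← mul_assoc, this]
    · simp [consG, hgg, mkL, ← mul_assoc, ← map_mul]
  | Sum.inr h :: t =>
    by_cases hg : g = 1 <;> simp [consG, hg, mkL]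

theorem prodL_consH (h : H) (l : List (Letter G H)) :
    prodL (consH h l) = inr h * prodL l := by
  match l with
  | [] =>
    by_cases hg : h = 1 <;> simp [consH, hg, mkL]
  | Sum.inr h' :: t =>
    by_cases hgg : h * h' = 1
    · have : (inr h : Coprod G H) * inr h' = 1 := by rw [← map_mul, hgg, map_one]
      simp [consH, hgg, mkL, ← mul_assoc, this]
    · simp [consH, hgg, mkL, ← mul_assoc, ← map_mul]
  | Sum.inl g :: t =>
    by_cases hg : h = 1 <;> simp [consH, hg, mkL]

/-- The type of reduced words. -/
def RW (G H : Type*) [Group G] [Group H] := {l : List (Letter G H) // Red l}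

/-- The action of `G` on reduced words, as a monoid hom to `Function.End`. -/
noncomputable def actG : G →* Function.End (RW G H) where
  toFun g := fun l => ⟨consG g l.1, l.2.consG g⟩
  map_one' := by
    funext l; exact Subtype.ext (consG_one l.2)
  map_mul' g₁ g₂ := by
    funext l; exact Subtype.ext (consG_mul g₁ g₂ l.2)

/-- The action of `H` on reduced words. -/
noncomputable def actH : H →* Function.End (RW G H) where
  toFun h := fun l => ⟨consH h l.1, l.2.consH h⟩
  map_one' := by
    funext l; exact Subtype.ext (consH_one l.2)
  map_mul' h₁ h₂ := by
    funext l; exact Subtype.ext (consH_mul h₁ h₂ l.2)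

/-- The action of the free product on reduced words. -/
noncomputable def act : Coprod G H →* Function.End (RW G H) := lift actG actH

/-- The reduced word of an element of the free product. -/
noncomputable def red (x : Coprod G H) : RW G H := act x ⟨[], Red.nil⟩

theorem red_inl_mul (g : G) (x : Coprod G H) :
    (red (inl g * x)).1 = consG g (red x).1 := by
  unfold red act
  rw [map_mul, lift_apply_inl]
  rfl

theorem red_inr_mul (h : H) (x : Coprod G H) :
    (red (inr h * x)).1 = consH h (red x).1 := by
  unfold red act
  rw [map_mul, lift_apply_inr]
  rfl

@[simp] theorem red_one : (red (1 : Coprod G H)).1 = [] := by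
  show (act 1 _).1 = _
  rw [map_one]; rfl

theorem prodL_red (x : Coprod G H) : prodL (red x).1 = x := by
  induction x using Coprod.induction_on' with
  | one => simp
  | inl_mul g x ih => rw [red_inl_mul, prodL_consG, ih]
  | inr_mul h x ih => rw [red_inr_mul, prodL_consH, ih]

theorem red_prodL {l : List (Letter G H)} (hl : Red l) : (red (prodL l)).1 = l := by
  induction l with
  | nil => simp
  | cons a t ih =>
    match a with
    | Sum.inl g =>
      have hg : g ≠ 1 := by simpa using hl.1 (Sum.inl g) (by simp)
      rw [prodL_cons, mkL, Sum.elim_inl, red_inl_mul, ih hl.tail,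
        consG_nil_or_inr (tail_shape_inl hl.2), if_neg hg]
    | Sum.inr h =>
      have hg : h ≠ 1 := by simpa using hl.1 (Sum.inr h) (by simp)
      rw [prodL_cons, mkL, Sum.elim_inr, red_inr_mul, ih hl.tail,
        consH_nil_or_inl (tail_shape_inr hl.2), if_neg hg]

end CGFP
section Part3
open Monoid Monoid.Coprod

namespace CGFP

variable {G H : Type*} [Group G] [Group H] (S : Set G) (T : Set H)

/-- The canonical generating set of the free product. -/
def U : Set (Coprod G H) :=
  (Monoid.Coprod.inl : G →* Monoid.Coprod G H) '' S ∪
    (Monoid.Coprod.inr : H →* Monoid.Coprod G H) '' T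

/-- Sum of the word norms of the letters of a word. -/
noncomputable def nsum (l : List (Letter G H)) : ℕ :=
  (l.map (Sum.elim (wordNorm S) (wordNorm T))).sum

@[simp] theorem nsum_nil : nsum S T ([] : List (Letter G H)) = 0 := rfl

@[simp] theorem nsum_cons (a : Letter G H) (t : List (Letter G H)) :
    nsum S T (a :: t) = Sum.elim (wordNorm S) (wordNorm T) a + nsum S T t := by
  simp [nsum]

theorem isRep_inl {g : G} {n : ℕ} (h : IsRep S g n) : IsRep (U S T) (inl g : Coprod G H) n := by
  obtain ⟨l, hl, hln, hlp⟩ := h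
  refine ⟨l.map inl, ?_, by simp [hln], ?_⟩
  · intro s hs
    obtain ⟨a, ha, rfl⟩ := List.mem_map.1 hs
    exact Or.inl ⟨a, hl a ha, rfl⟩
  · rw [← map_list_prod, hlp]

theorem isRep_inr {h : H} {n : ℕ} (hh : IsRep T h n) : IsRep (U S T) (inr h : Coprod G H) n := by
  obtain ⟨l, hl, hln, hlp⟩ := hh
  refine ⟨l.map inr, ?_, by simp [hln], ?_⟩
  · intro s hs
    obtain ⟨a, ha, rfl⟩ := List.mem_map.1 hs
    exact Or.inr ⟨a, hl a ha, rfl⟩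
  · rw [← map_list_prod, hlp]

variable {S T}
variable (achS : ∀ g : G, Ach S g) (achT : ∀ h : H, Ach T h)

section
include achS

theorem wordNorm_inl_le (g : G) : wordNorm (U S T) (inl g : Coprod G H) ≤ wordNorm S g :=
  wordNorm_le (isRep_inl S T (isRep_wordNorm (achS g)))

theorem achU_inl (g : G) : Ach (U S T) (inl g : Coprod G H) :=
  ⟨_, isRep_inl S T (isRep_wordNorm (achS g))⟩

end

section
include achT

theorem wordNorm_inr_le (h : H) : wordNorm (U S T) (inr h : Coprod G H) ≤ wordNorm T h :=
  wordNorm_le (isRep_inr S T (isRep_wordNorm (achT h)))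

theorem achU_inr (h : H) : Ach (U S T) (inr h : Coprod G H) :=
  ⟨_, isRep_inr S T (isRep_wordNorm (achT h))⟩

end

include achS achT

theorem achU (x : Coprod G H) : Ach (U S T) x := by
  induction x using Coprod.induction_on' with
  | one => exact ⟨0, isRep_one _⟩
  | inl_mul g x ih => exact ach_mul (achU_inl achS g) ih
  | inr_mul h x ih => exact ach_mul (achU_inr achT h) ih

theorem wordNorm_prodL_le (l : List (Letter G H)) :
    wordNorm (U S T) (prodL l) ≤ nsum S T l := by
  induction l with
  | nil => simp [wordNorm_one]
  | cons a t ih =>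
    rw [prodL_cons, nsum_cons]
    refine le_trans (wordNorm_mul_le (achU achS achT _) (achU achS achT _)) ?_
    gcongr
    match a with
    | Sum.inl g => exact wordNorm_inl_le achS g
    | Sum.inr h => exact wordNorm_inr_le achT h

theorem nsum_consG_le (g : G) (l : List (Letter G H)) :
    nsum S T (consG g l) ≤ wordNorm S g + nsum S T l := by
  match l with
  | [] =>
    by_cases hg : g = 1 <;> simp [consG, hg]
  | Sum.inl g' :: t =>
    by_cases hgg : g * g' = 1
    · simp only [consG, if_pos hgg, nsum_cons, Sum.elim_inl]
      omega
    · simp only [consG, if_neg hgg, nsum_cons, Sum.elim_inl]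
      have := wordNorm_mul_le (achS g) (achS g')
      omega
  | Sum.inr h :: t =>
    by_cases hg : g = 1 <;> simp [consG, hg]

theorem nsum_consH_le (h : H) (l : List (Letter G H)) :
    nsum S T (consH h l) ≤ wordNorm T h + nsum S T l := by
  match l with
  | [] =>
    by_cases hg : h = 1 <;> simp [consH, hg]
  | Sum.inr h' :: t =>
    by_cases hgg : h * h' = 1
    · simp only [consH, if_pos hgg, nsum_cons, Sum.elim_inr]
      omega
    · simp only [consH, if_neg hgg, nsum_cons, Sum.elim_inr]
      have := wordNorm_mul_le (achT h) (achT h')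
      omega
  | Sum.inl g :: t =>
    by_cases hg : h = 1 <;> simp [consH, hg]

theorem nsum_red_prod_le (l : List (Coprod G H)) (hl : ∀ s ∈ l, s ∈ U S T) :
    nsum S T (red l.prod).1 ≤ l.length := by
  induction l with
  | nil => simp
  | cons s t ih =>
    have hs := hl s (by simp)
    have ht : nsum S T (red t.prod).1 ≤ t.length := ih fun a ha => hl a (by simp [ha])
    rw [List.prod_cons]
    rcases hs with ⟨g, hg, rfl⟩ | ⟨h, hh, rfl⟩
    · rw [red_inl_mul]
      calc nsum S T (consG g (red t.prod).1) ≤ wordNorm S g + nsum S T (red t.prod).1 :=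
            nsum_consG_le achS achT g _
        _ ≤ 1 + t.length := by have := wordNorm_le_one hg; omega
        _ = _ := by simp [Nat.add_comm]
    · rw [red_inr_mul]
      calc nsum S T (consH h (red t.prod).1) ≤ wordNorm T h + nsum S T (red t.prod).1 :=
            nsum_consH_le achS achT h _
        _ ≤ 1 + t.length := by have := wordNorm_le_one hh; omega
        _ = _ := by simp [Nat.add_comm]

theorem wordNorm_eq_nsum_red (x : Coprod G H) :
    wordNorm (U S T) x = nsum S T (red x).1 := by
  refine le_antisymm ?_ ?_
  · conv_lhs => rw [← prodL_red x]
    exact wordNorm_prodL_le achS achT _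
  · obtain ⟨l, hl, hln, hlp⟩ := isRep_wordNorm (achU achS achT x)
    calc nsum S T (red x).1 = nsum S T (red l.prod).1 := by rw [hlp]
      _ ≤ l.length := nsum_red_prod_le achS achT l hl
      _ = _ := by rw [hln]

omit achS achT in
theorem red_inl {g : G} (hg : g ≠ 1) : (red (inl g : Coprod G H)).1 = [Sum.inl g] := by
  have : (inl g : Coprod G H) = prodL [Sum.inl g] := by simp [mkL]
  rw [this, red_prodL ⟨by simpa using hg, by simp [List.Chain']⟩]

omit achS achT in
theorem red_inr {h : H} (hh : h ≠ 1) : (red (inr h : Coprod G H)).1 = [Sum.inr h] := by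
  have : (inr h : Coprod G H) = prodL [Sum.inr h] := by simp [mkL]
  rw [this, red_prodL ⟨by simpa using hh, by simp [List.Chain']⟩]

theorem wordNorm_inl_eq (g : G) : wordNorm (U S T) (inl g : Coprod G H) = wordNorm S g := by
  by_cases hg : g = 1
  · simp [hg, wordNorm_one]
  · rw [wordNorm_eq_nsum_red achS achT, red_inl hg]
    simp

theorem wordNorm_inr_eq (h : H) : wordNorm (U S T) (inr h : Coprod G H) = wordNorm T h := by
  by_cases hh : h = 1
  · simp [hh, wordNorm_one]
  · rw [wordNorm_eq_nsum_red achS achT, red_inr hh]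
    simp

end CGFP
end Part3
section Part3b
open Monoid Monoid.Coprod

namespace CGFP
attribute [local instance] Classical.propDecidable

variable {G H : Type*} [Group G] [Group H] {S : Set G} {T : Set H}

/-- Elements whose reduced word starts with a `G`-syllable. -/
def SX (G H : Type*) [Group G] [Group H] : Set (Coprod G H) :=
  {x | ∃ g t, (red x).1 = Sum.inl g :: t}

/-- Elements whose reduced word starts with an `H`-syllable. -/
def SY (G H : Type*) [Group G] [Group H] : Set (Coprod G H) :=
  {x | ∃ h t, (red x).1 = Sum.inr h :: t}

theorem red_eq_nil_iff {x : Coprod G H} : (red x).1 = [] ↔ x = 1 :=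
  ⟨fun h => by rw [← prodL_red x, h, prodL_nil], fun h => by rw [h, red_one]⟩

theorem trichotomy (x : Coprod G H) : x = 1 ∨ x ∈ SX G H ∨ x ∈ SY G H := by
  match h : (red x).1 with
  | [] => exact Or.inl (red_eq_nil_iff.1 h)
  | Sum.inl g :: t => exact Or.inr (Or.inl ⟨g, t, h⟩)
  | Sum.inr g :: t => exact Or.inr (Or.inr ⟨g, t, h⟩)

theorem one_notMem_SX : (1 : Coprod G H) ∉ SX G H := by
  rintro ⟨g, t, h⟩; rw [red_one] at h; exact List.cons_ne_nil _ _ h.symm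

theorem one_notMem_SY : (1 : Coprod G H) ∉ SY G H := by
  rintro ⟨g, t, h⟩; rw [red_one] at h; exact List.cons_ne_nil _ _ h.symm

theorem disjoint_SX_SY : Disjoint (SX G H) (SY G H) := by
  rw [Set.disjoint_left]
  rintro x ⟨g, t, h⟩ ⟨g', t', h'⟩
  rw [h] at h'
  exact Sum.inl_ne_inr (List.head_eq_of_cons_eq h')

theorem shape_of_mem_QY {y : Coprod G H} (hy : y ∈ {(1 : Coprod G H)} ∪ SY G H) :
    (red y).1 = [] ∨ ∃ x t', (red y).1 = Sum.inr x :: t' := by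
  rcases hy with rfl | ⟨h, t, ht⟩
  · exact Or.inl red_one
  · exact Or.inr ⟨h, t, ht⟩

theorem shape_of_mem_QX {y : Coprod G H} (hy : y ∈ {(1 : Coprod G H)} ∪ SX G H) :
    (red y).1 = [] ∨ ∃ x t', (red y).1 = Sum.inl x :: t' := by
  rcases hy with rfl | ⟨g, t, ht⟩
  · exact Or.inl red_one
  · exact Or.inr ⟨g, t, ht⟩

theorem red_inl_mul_QY (g : G) {y : Coprod G H} (hy : y ∈ {(1 : Coprod G H)} ∪ SY G H) :
    (red ((inl g : Coprod G H) * y)).1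
      = if g = 1 then (red y).1 else Sum.inl g :: (red y).1 := by
  rw [red_inl_mul, consG_nil_or_inr (shape_of_mem_QY hy)]

theorem red_inr_mul_QX (h : H) {y : Coprod G H} (hy : y ∈ {(1 : Coprod G H)} ∪ SX G H) :
    (red ((inr h : Coprod G H) * y)).1
      = if h = 1 then (red y).1 else Sum.inr h :: (red y).1 := by
  rw [red_inr_mul, consH_nil_or_inl (shape_of_mem_QX hy)]

variable (achS : ∀ g : G, Ach S g) (achT : ∀ h : H, Ach T h)

include achS achT

theorem wordNorm_inl_mul_QY (g : G) {y : Coprod G H}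
    (hy : y ∈ {(1 : Coprod G H)} ∪ SY G H) :
    wordNorm (U S T) ((inl g : Coprod G H) * y)
      = wordNorm S g + wordNorm (U S T) y := by
  rw [wordNorm_eq_nsum_red achS achT, wordNorm_eq_nsum_red achS achT,
    red_inl_mul_QY g hy]
  by_cases hg : g = 1
  · simp [hg, wordNorm_one]
  · simp [hg]

theorem wordNorm_inr_mul_QX (h : H) {y : Coprod G H}
    (hy : y ∈ {(1 : Coprod G H)} ∪ SX G H) :
    wordNorm (U S T) ((inr h : Coprod G H) * y)
      = wordNorm T h + wordNorm (U S T) y := by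
  rw [wordNorm_eq_nsum_red achS achT, wordNorm_eq_nsum_red achS achT,
    red_inr_mul_QX h hy]
  by_cases hg : h = 1
  · simp [hg, wordNorm_one]
  · simp [hg]

omit achS achT

theorem prodL_mem_QY {l : List (Letter G H)} (hl : Red l)
    (hshape : l = [] ∨ ∃ x t', l = Sum.inr x :: t') :
    prodL l ∈ {(1 : Coprod G H)} ∪ SY G H := by
  rcases hshape with rfl | ⟨x, t', rfl⟩
  · exact Or.inl (by simp)
  · exact Or.inr ⟨x, t', red_prodL hl⟩

theorem prodL_mem_QX {l : List (Letter G H)} (hl : Red l)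
    (hshape : l = [] ∨ ∃ x t', l = Sum.inl x :: t') :
    prodL l ∈ {(1 : Coprod G H)} ∪ SX G H := by
  rcases hshape with rfl | ⟨x, t', rfl⟩
  · exact Or.inl (by simp)
  · exact Or.inr ⟨x, t', red_prodL hl⟩

theorem exists_decompG (x : Coprod G H) :
    ∃ g : G, ∃ y ∈ {(1 : Coprod G H)} ∪ SY G H, x = inl g * y := by
  match h : (red x).1 with
  | [] =>
    exact ⟨1, 1, Or.inl rfl, by rw [red_eq_nil_iff.1 h]; simp⟩
  | Sum.inl g :: t =>
    have hred : Red ((red x).1) := (red x).2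
    rw [h] at hred
    refine ⟨g, prodL t, prodL_mem_QY hred.tail (tail_shape_inl hred.2), ?_⟩
    conv_lhs => rw [← prodL_red x, h]
    simp [mkL]
  | Sum.inr g :: t =>
    exact ⟨1, x, Or.inr ⟨g, t, h⟩, by simp⟩

theorem exists_decompH (x : Coprod G H) :
    ∃ h : H, ∃ y ∈ {(1 : Coprod G H)} ∪ SX G H, x = inr h * y := by
  match h : (red x).1 with
  | [] =>
    exact ⟨1, 1, Or.inl rfl, by rw [red_eq_nil_iff.1 h]; simp⟩
  | Sum.inr g :: t =>
    have hred : Red ((red x).1) := (red x).2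
    rw [h] at hred
    refine ⟨g, prodL t, prodL_mem_QX hred.tail (tail_shape_inr hred.2), ?_⟩
    conv_lhs => rw [← prodL_red x, h]
    simp [mkL]
  | Sum.inl g :: t =>
    exact ⟨1, x, Or.inr ⟨g, t, h⟩, by simp⟩

theorem decompG_inj {g₁ g₂ : G} {y₁ y₂ : Coprod G H}
    (hy₁ : y₁ ∈ {(1 : Coprod G H)} ∪ SY G H) (hy₂ : y₂ ∈ {(1 : Coprod G H)} ∪ SY G H)
    (heq : (inl g₁ : Coprod G H) * y₁ = inl g₂ * y₂) : g₁ = g₂ ∧ y₁ = y₂ := by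
  have hred : (red ((inl g₁ : Coprod G H) * y₁)).1 = (red ((inl g₂ : Coprod G H) * y₂)).1 := by
    rw [heq]
  rw [red_inl_mul_QY g₁ hy₁, red_inl_mul_QY g₂ hy₂] at hred
  have hy : ∀ y₁ y₂ : Coprod G H, (red y₁).1 = (red y₂).1 → y₁ = y₂ := fun a b hab => by
    rw [← prodL_red a, ← prodL_red b, hab]
  by_cases h1 : g₁ = 1 <;> by_cases h2 : g₂ = 1
  · rw [if_pos h1, if_pos h2] at hred
    exact ⟨h1.trans h2.symm, hy _ _ hred⟩
  · rw [if_pos h1, if_neg h2] at hred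
    rcases shape_of_mem_QY hy₁ with hn | ⟨x, t', ht⟩
    · rw [hn] at hred; exact absurd hred (by simp)
    · rw [ht] at hred; exact absurd (List.head_eq_of_cons_eq hred.symm) (by simp)
  · rw [if_neg h1, if_pos h2] at hred
    rcases shape_of_mem_QY hy₂ with hn | ⟨x, t', ht⟩
    · rw [hn] at hred; exact absurd hred (by simp)
    · rw [ht] at hred; exact absurd (List.head_eq_of_cons_eq hred) (by simp)
  · rw [if_neg h1, if_neg h2] at hred
    have h := List.head_eq_of_cons_eq hred
    have := List.tail_eq_of_cons_eq hred
    exact ⟨Sum.inl.inj h, hy _ _ this⟩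

theorem decompH_inj {h₁ h₂ : H} {y₁ y₂ : Coprod G H}
    (hy₁ : y₁ ∈ {(1 : Coprod G H)} ∪ SX G H) (hy₂ : y₂ ∈ {(1 : Coprod G H)} ∪ SX G H)
    (heq : (inr h₁ : Coprod G H) * y₁ = inr h₂ * y₂) : h₁ = h₂ ∧ y₁ = y₂ := by
  have hred : (red ((inr h₁ : Coprod G H) * y₁)).1 = (red ((inr h₂ : Coprod G H) * y₂)).1 := by
    rw [heq]
  rw [red_inr_mul_QX h₁ hy₁, red_inr_mul_QX h₂ hy₂] at hred
  have hy : ∀ y₁ y₂ : Coprod G H, (red y₁).1 = (red y₂).1 → y₁ = y₂ := fun a b hab => by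
    rw [← prodL_red a, ← prodL_red b, hab]
  by_cases h1 : h₁ = 1 <;> by_cases h2 : h₂ = 1
  · rw [if_pos h1, if_pos h2] at hred
    exact ⟨h1.trans h2.symm, hy _ _ hred⟩
  · rw [if_pos h1, if_neg h2] at hred
    rcases shape_of_mem_QX hy₁ with hn | ⟨x, t', ht⟩
    · rw [hn] at hred; exact absurd hred (by simp)
    · rw [ht] at hred; exact absurd (List.head_eq_of_cons_eq hred.symm) (by simp)
  · rw [if_neg h1, if_pos h2] at hred
    rcases shape_of_mem_QX hy₂ with hn | ⟨x, t', ht⟩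
    · rw [hn] at hred; exact absurd hred (by simp)
    · rw [ht] at hred; exact absurd (List.head_eq_of_cons_eq hred) (by simp)
  · rw [if_neg h1, if_neg h2] at hred
    have h := List.head_eq_of_cons_eq hred
    have := List.tail_eq_of_cons_eq hred
    exact ⟨Sum.inr.inj h, hy _ _ this⟩

end CGFP
end Part3b
section Part4
open Monoid Monoid.Coprod Finset

namespace CGFP
attribute [local instance] Classical.propDecidable

variable {G H : Type*} [Group G] [Group H] (S : Set G) (T : Set H)

/-- Sum of group elements of a set, in the monoid algebra. -/
noncomputable def elt (P : Set (Coprod G H)) : MonoidAlgebra ℤ (Coprod G H) :=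
  ∑ᶠ x ∈ P, MonoidAlgebra.of ℤ (Coprod G H) x

/-- The sphere of radius `n` in the free product. -/
def Wn (n : ℕ) : Set (Coprod G H) := {x | wordNorm (U S T) x = n}

/-- The partial growth series of a subset of the free product. -/
noncomputable def E (P : Set (Coprod G H)) : PowerSeries (MonoidAlgebra ℤ (Coprod G H)) :=
  PowerSeries.mk fun n => elt (P ∩ Wn S T n)

theorem elt_finset {P : Set (Coprod G H)} (hP : P.Finite) :
    elt P = ∑ x ∈ hP.toFinset, MonoidAlgebra.of ℤ (Coprod G H) x := by
  conv_lhs => rw [elt, ← hP.coe_toFinset]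
  rw [finsum_mem_coe_finset]

theorem elt_empty : elt (∅ : Set (Coprod G H)) = 0 := finsum_mem_empty

theorem elt_singleton (x : Coprod G H) :
    elt {x} = MonoidAlgebra.of ℤ (Coprod G H) x := finsum_mem_singleton

theorem elt_union {P Q : Set (Coprod G H)} (h : Disjoint P Q) (hP : P.Finite) (hQ : Q.Finite) :
    elt (P ∪ Q) = elt P + elt Q := finsum_mem_union h hP hQ

variable {S T}
variable (hSfin : S.Finite) (hTfin : T.Finite)
variable (achS : ∀ g : G, Ach S g) (achT : ∀ h : H, Ach T h)

include hSfin hTfin achS achT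

theorem finW (n : ℕ) : (Wn S T n).Finite :=
  finite_wordNorm_eq ((hSfin.image _).union (hTfin.image _)) (achU achS achT) n

theorem finPW (P : Set (Coprod G H)) (n : ℕ) : (P ∩ Wn S T n).Finite :=
  (finW hSfin hTfin achS achT n).subset Set.inter_subset_right

theorem E_union {P Q : Set (Coprod G H)} (h : Disjoint P Q) :
    E S T (P ∪ Q) = E S T P + E S T Q := by
  apply PowerSeries.ext
  intro n
  simp only [E, PowerSeries.coeff_mk, map_add]
  rw [Set.union_inter_distrib_right,
    elt_union (h.mono Set.inter_subset_left Set.inter_subset_left)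
      (finPW hSfin hTfin achS achT P n) (finPW hSfin hTfin achS achT Q n)]

omit hSfin hTfin in
include achS achT in
theorem one_mem_Wn_iff (n : ℕ) : (1 : Coprod G H) ∈ Wn S T n ↔ n = 0 := by
  constructor
  · intro hx; rw [Wn, Set.mem_setOf_eq, wordNorm_one] at hx; exact hx.symm
  · rintro rfl; exact wordNorm_one _

omit hSfin hTfin in
include achS achT in
theorem E_singleton_one : E S T {(1 : Coprod G H)} = 1 := by
  apply PowerSeries.ext
  intro n
  simp only [E, PowerSeries.coeff_mk, PowerSeries.coeff_one]
  by_cases hn : n = 0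
  · subst hn
    have : ({(1 : Coprod G H)} : Set (Coprod G H)) ∩ Wn S T 0 = {1} := by
      apply Set.inter_eq_self_of_subset_left
      intro x hx
      rw [Set.mem_singleton_iff] at hx
      subst hx
      exact wordNorm_one _
    rw [this, elt_singleton, if_pos rfl, map_one]
  · have : ({(1 : Coprod G H)} : Set (Coprod G H)) ∩ Wn S T n = ∅ := by
      apply Set.eq_empty_of_forall_notMem
      rintro x ⟨hx1, hx2⟩
      rw [Set.mem_singleton_iff] at hx1
      subst hx1
      exact hn ((one_mem_Wn_iff achS achT n).1 hx2)
    rw [this, elt_empty, if_neg hn]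

omit hSfin hTfin achS achT in
theorem E_cgs : completeGrowthSeries (U S T) = E S T Set.univ := by
  apply PowerSeries.ext
  intro n
  simp only [completeGrowthSeries, E, PowerSeries.coeff_mk, Set.univ_inter]
  rfl

/-- The central multiplication lemma. -/
theorem E_mul {P Q Rs : Set (Coprod G H)}
    (hnorm : ∀ p ∈ P, ∀ q ∈ Q,
      wordNorm (U S T) (p * q) = wordNorm (U S T) p + wordNorm (U S T) q)
    (hinj : ∀ p₁ ∈ P, ∀ q₁ ∈ Q, ∀ p₂ ∈ P, ∀ q₂ ∈ Q, p₁ * q₁ = p₂ * q₂ → p₁ = p₂ ∧ q₁ = q₂)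
    (hsurj : ∀ x ∈ Rs, ∃ p ∈ P, ∃ q ∈ Q, x = p * q)
    (hmem : ∀ p ∈ P, ∀ q ∈ Q, p * q ∈ Rs) :
    E S T P * E S T Q = E S T Rs := by
  classical
  apply PowerSeries.ext
  intro n
  set of' := MonoidAlgebra.of ℤ (Coprod G H) with hof
  have finA : ∀ i, (P ∩ Wn S T i).Finite := finPW hSfin hTfin achS achT P
  have finB : ∀ i, (Q ∩ Wn S T i).Finite := finPW hSfin hTfin achS achT Q
  have finC : (Rs ∩ Wn S T n).Finite := finPW hSfin hTfin achS achT Rs n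
  rw [PowerSeries.coeff_mul]
  simp only [E, PowerSeries.coeff_mk]
  have hterm : ∀ p : ℕ × ℕ, elt (P ∩ Wn S T p.1) * elt (Q ∩ Wn S T p.2)
      = ∑ z ∈ (finA p.1).toFinset ×ˢ (finB p.2).toFinset, of' (z.1 * z.2) := by
    intro p
    rw [elt_finset (finA p.1), elt_finset (finB p.2), Finset.sum_mul_sum]
    rw [Finset.sum_product]
    exact Finset.sum_congr rfl fun x _ => Finset.sum_congr rfl fun y _ => (map_mul of' x y).symm
  rw [Finset.sum_congr rfl fun p _ => hterm p, Finset.sum_sigma', elt_finset finC]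
  refine Finset.sum_bij (fun z _ => z.2.1 * z.2.2) ?_ ?_ ?_ ?_
  · rintro ⟨⟨i, j⟩, x, y⟩ hz
    rw [Finset.mem_sigma, Finset.mem_product, Set.Finite.mem_toFinset,
      Set.Finite.mem_toFinset] at hz
    obtain ⟨hij, ⟨hxP, hxW⟩, hyQ, hyW⟩ := hz
    rw [Set.Finite.mem_toFinset]
    refine ⟨hmem _ hxP _ hyQ, ?_⟩
    show wordNorm (U S T) (x * y) = n
    rw [hnorm _ hxP _ hyQ, hxW, hyW]
    exact Finset.HasAntidiagonal.mem_antidiagonal.1 hij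
  · rintro ⟨⟨i₁, j₁⟩, x₁, y₁⟩ hz₁ ⟨⟨i₂, j₂⟩, x₂, y₂⟩ hz₂ heq
    rw [Finset.mem_sigma, Finset.mem_product, Set.Finite.mem_toFinset,
      Set.Finite.mem_toFinset] at hz₁ hz₂
    obtain ⟨hij₁, ⟨hxP₁, hxW₁⟩, hyQ₁, hyW₁⟩ := hz₁
    obtain ⟨hij₂, ⟨hxP₂, hxW₂⟩, hyQ₂, hyW₂⟩ := hz₂
    obtain ⟨hx, hy⟩ := hinj _ hxP₁ _ hyQ₁ _ hxP₂ _ hyQ₂ heq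
    subst hx; subst hy
    have hi : i₁ = i₂ := hxW₁.symm.trans hxW₂
    have hj : j₁ = j₂ := hyW₁.symm.trans hyW₂
    subst hi; subst hj
    rfl
  · intro b hb
    rw [Set.Finite.mem_toFinset] at hb
    obtain ⟨hbR, hbW⟩ := hb
    obtain ⟨p, hp, q, hq, rfl⟩ := hsurj _ hbR
    refine ⟨⟨(wordNorm (U S T) p, wordNorm (U S T) q), p, q⟩, ?_, rfl⟩
    rw [Finset.mem_sigma, Finset.mem_product, Set.Finite.mem_toFinset,
      Set.Finite.mem_toFinset]
    refine ⟨Finset.HasAntidiagonal.mem_antidiagonal.2 ?_, ⟨hp, rfl⟩, hq, rfl⟩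
    rw [← hnorm _ hp _ hq]
    exact hbW
  · intro a _
    rfl

end CGFP
end Part4
section Part5
open Monoid Monoid.Coprod Finset

namespace CGFP
attribute [local instance] Classical.propDecidable

variable {G H : Type*} [Group G] [Group H] {S : Set G} {T : Set H}

theorem inl_inj : Function.Injective (inl : G → Coprod G H) := fun a b h => by
  simpa using congrArg Coprod.fst h

theorem inr_inj : Function.Injective (inr : H → Coprod G H) := fun a b h => by
  simpa using congrArg Coprod.snd h

variable (hSfin : S.Finite) (hTfin : T.Finite)
variable (achS : ∀ g : G, Ach S g) (achT : ∀ h : H, Ach T h)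

include hSfin achS achT in
theorem B_eq :
    PowerSeries.map (MonoidAlgebra.mapDomainRingHom ℤ (inl : G →* Coprod G H))
      (completeGrowthSeries S) = E S T (Set.range (inl : G → Coprod G H)) := by
  apply PowerSeries.ext
  intro n
  have finP₀ : {g : G | wordNorm S g = n}.Finite := finite_wordNorm_eq hSfin achS n
  rw [PowerSeries.coeff_map]
  simp only [completeGrowthSeries, E, PowerSeries.coeff_mk]
  have h1 : (∑ᶠ g ∈ {g : G | wordNorm S g = n}, MonoidAlgebra.of ℤ G g)
      = ∑ g ∈ finP₀.toFinset, MonoidAlgebra.of ℤ G g := by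
    conv_lhs => rw [← finP₀.coe_toFinset]
    rw [finsum_mem_coe_finset]
  rw [h1, map_sum]
  have h2 : ∀ g : G, (MonoidAlgebra.mapDomainRingHom ℤ (inl : G →* Coprod G H))
      (MonoidAlgebra.of ℤ G g) = MonoidAlgebra.of ℤ (Coprod G H) (inl g) := by
    intro g
    rw [MonoidAlgebra.of_apply, MonoidAlgebra.of_apply]
    exact MonoidAlgebra.mapDomain_single
  rw [Finset.sum_congr rfl fun g _ => h2 g, ← Finset.sum_image (f := MonoidAlgebra.of ℤ _)
    (g := inl) (fun x _ y _ h => inl_inj h)]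
  have hset : Set.range (inl : G → Coprod G H) ∩ Wn S T n
      = (inl : G → Coprod G H) '' {g : G | wordNorm S g = n} := by
    ext x
    constructor
    · rintro ⟨⟨g, rfl⟩, hx⟩
      refine ⟨g, ?_, rfl⟩
      have : wordNorm (U S T) (inl g : Coprod G H) = n := hx
      rwa [wordNorm_inl_eq achS achT] at this
    · rintro ⟨g, hg, rfl⟩
      exact ⟨⟨g, rfl⟩, by
        show wordNorm (U S T) (inl g) = n
        rw [wordNorm_inl_eq achS achT]; exact hg⟩
  rw [hset, elt_finset (finP₀.image _)]
  refine Finset.sum_congr ?_ (fun _ _ => rfl)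
  apply Finset.ext
  intro x
  rw [Set.Finite.mem_toFinset, Finset.mem_image]
  constructor
  · rintro ⟨g, hg, rfl⟩
    exact ⟨g, finP₀.mem_toFinset.1 hg, rfl⟩
  · rintro ⟨g, hg, rfl⟩
    exact ⟨g, finP₀.mem_toFinset.2 hg, rfl⟩

include hTfin achS achT in
theorem C_eq :
    PowerSeries.map (MonoidAlgebra.mapDomainRingHom ℤ (inr : H →* Coprod G H))
      (completeGrowthSeries T) = E S T (Set.range (inr : H → Coprod G H)) := by
  apply PowerSeries.ext
  intro n
  have finP₀ : {h : H | wordNorm T h = n}.Finite := finite_wordNorm_eq hTfin achT n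
  rw [PowerSeries.coeff_map]
  simp only [completeGrowthSeries, E, PowerSeries.coeff_mk]
  have h1 : (∑ᶠ h ∈ {h : H | wordNorm T h = n}, MonoidAlgebra.of ℤ H h)
      = ∑ h ∈ finP₀.toFinset, MonoidAlgebra.of ℤ H h := by
    conv_lhs => rw [← finP₀.coe_toFinset]
    rw [finsum_mem_coe_finset]
  rw [h1, map_sum]
  have h2 : ∀ h : H, (MonoidAlgebra.mapDomainRingHom ℤ (inr : H →* Coprod G H))
      (MonoidAlgebra.of ℤ H h) = MonoidAlgebra.of ℤ (Coprod G H) (inr h) := by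
    intro h
    rw [MonoidAlgebra.of_apply, MonoidAlgebra.of_apply]
    exact MonoidAlgebra.mapDomain_single
  rw [Finset.sum_congr rfl fun h _ => h2 h, ← Finset.sum_image (f := MonoidAlgebra.of ℤ _)
    (g := inr) (fun x _ y _ h => inr_inj h)]
  have hset : Set.range (inr : H → Coprod G H) ∩ Wn S T n
      = (inr : H → Coprod G H) '' {h : H | wordNorm T h = n} := by
    ext x
    constructor
    · rintro ⟨⟨h, rfl⟩, hx⟩
      refine ⟨h, ?_, rfl⟩
      have : wordNorm (U S T) (inr h : Coprod G H) = n := hx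
      rwa [wordNorm_inr_eq achS achT] at this
    · rintro ⟨h, hh, rfl⟩
      exact ⟨⟨h, rfl⟩, by
        show wordNorm (U S T) (inr h) = n
        rw [wordNorm_inr_eq achS achT]; exact hh⟩
  rw [hset, elt_finset (finP₀.image _)]
  refine Finset.sum_congr ?_ (fun _ _ => rfl)
  apply Finset.ext
  intro x
  rw [Set.Finite.mem_toFinset, Finset.mem_image]
  constructor
  · rintro ⟨h, hh, rfl⟩
    exact ⟨h, finP₀.mem_toFinset.1 hh, rfl⟩
  · rintro ⟨h, hh, rfl⟩
    exact ⟨h, finP₀.mem_toFinset.2 hh, rfl⟩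

include hSfin hTfin achS achT

theorem BQ_eq :
    E S T (Set.range (inl : G → Coprod G H)) * E S T ({(1 : Coprod G H)} ∪ SY G H)
      = E S T Set.univ := by
  refine E_mul hSfin hTfin achS achT ?_ ?_ ?_ ?_
  · rintro p ⟨g, rfl⟩ q hq
    rw [wordNorm_inl_mul_QY achS achT g hq, wordNorm_inl_eq achS achT]
  · rintro p₁ ⟨g₁, rfl⟩ q₁ hq₁ p₂ ⟨g₂, rfl⟩ q₂ hq₂ heq
    obtain ⟨hg, hy⟩ := decompG_inj hq₁ hq₂ heq
    exact ⟨congrArg inl hg, hy⟩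
  · intro x _
    obtain ⟨g, y, hy, hxy⟩ := exists_decompG x
    exact ⟨inl g, ⟨g, rfl⟩, y, hy, hxy⟩
  · intros; trivial

theorem CQ_eq :
    E S T (Set.range (inr : H → Coprod G H)) * E S T ({(1 : Coprod G H)} ∪ SX G H)
      = E S T Set.univ := by
  refine E_mul hSfin hTfin achS achT ?_ ?_ ?_ ?_
  · rintro p ⟨h, rfl⟩ q hq
    rw [wordNorm_inr_mul_QX achS achT h hq, wordNorm_inr_eq achS achT]
  · rintro p₁ ⟨h₁, rfl⟩ q₁ hq₁ p₂ ⟨h₂, rfl⟩ q₂ hq₂ heq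
    obtain ⟨hh, hy⟩ := decompH_inj hq₁ hq₂ heq
    exact ⟨congrArg inr hh, hy⟩
  · intro x _
    obtain ⟨h, y, hy, hxy⟩ := exists_decompH x
    exact ⟨inr h, ⟨h, rfl⟩, y, hy, hxy⟩
  · intros; trivial

theorem E_univ_eq : E S T Set.univ
    = 1 + (E S T (SX G H) + E S T (SY G H)) := by
  have hset : (Set.univ : Set (Coprod G H)) = {(1 : Coprod G H)} ∪ (SX G H ∪ SY G H) := by
    apply Set.eq_univ_iff_forall.2 ?_ |>.symm
    intro x
    rcases trichotomy x with rfl | hx | hx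
    · exact Or.inl rfl
    · exact Or.inr (Or.inl hx)
    · exact Or.inr (Or.inr hx)
  rw [hset, E_union hSfin hTfin achS achT, E_union hSfin hTfin achS achT disjoint_SX_SY,
    E_singleton_one achS achT]
  rw [Set.disjoint_left]
  rintro x rfl hx
  rcases hx with hx | hx
  · exact one_notMem_SX hx
  · exact one_notMem_SY hx

theorem E_QY_eq : E S T ({(1 : Coprod G H)} ∪ SY G H) = 1 + E S T (SY G H) := by
  rw [E_union hSfin hTfin achS achT, E_singleton_one achS achT]
  rw [Set.disjoint_left]
  rintro x rfl hx
  exact one_notMem_SY hx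

theorem E_QX_eq : E S T ({(1 : Coprod G H)} ∪ SX G H) = 1 + E S T (SX G H) := by
  rw [E_union hSfin hTfin achS achT, E_singleton_one achS achT]
  rw [Set.disjoint_left]
  rintro x rfl hx
  exact one_notMem_SX hx

omit hSfin hTfin in
theorem E_constantCoeff {P : Set (Coprod G H)} (h1 : (1 : Coprod G H) ∈ P) :
    PowerSeries.constantCoeff (E S T P) = 1 := by
  rw [← PowerSeries.coeff_zero_eq_constantCoeff_apply]
  simp only [E, PowerSeries.coeff_mk]
  have : P ∩ Wn S T 0 = {1} := by
    ext x
    constructor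
    · rintro ⟨_, hx⟩
      exact eq_one_of_wordNorm_eq_zero (achU achS achT x) hx
    · rintro rfl
      exact ⟨h1, wordNorm_one _⟩
  rw [this, elt_singleton, map_one]

end CGFP
end Part5
/-- **Complete growth series of a free product**: for groups `G`, `H` with finite
symmetric generating sets `S`, `T`, and the free product `G ∗ H` generated by the
images of `S` and `T`, the three series `A = CG_{G∗H}(z)`, `B = ι_G(CG_{G,S}(z))`,
`C = ι_H(CG_{H,T}(z))` have constant coefficient `1` (hence are units of the power
series ring), and `A⁻¹ = B⁻¹ + C⁻¹ − 1`. -/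
theorem completeGrowthSeries_freeProd {G H : Type*} [Group G] [Group H]
    (S : Set G) (T : Set H)
    (hSfin : S.Finite) (hTfin : T.Finite)
    (hSsym : S⁻¹ = S) (hTsym : T⁻¹ = T)
    (hSgen : Subgroup.closure S = ⊤) (hTgen : Subgroup.closure T = ⊤) :
    let A := completeGrowthSeries
      ((Monoid.Coprod.inl : G →* Monoid.Coprod G H) '' S ∪
        (Monoid.Coprod.inr : H →* Monoid.Coprod G H) '' T)
    let B := PowerSeries.map
      (MonoidAlgebra.mapDomainRingHom ℤ (Monoid.Coprod.inl : G →* Monoid.Coprod G H))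
      (completeGrowthSeries S)
    let C := PowerSeries.map
      (MonoidAlgebra.mapDomainRingHom ℤ (Monoid.Coprod.inr : H →* Monoid.Coprod G H))
      (completeGrowthSeries T)
    PowerSeries.constantCoeff A = 1 ∧
    PowerSeries.constantCoeff B = 1 ∧
    PowerSeries.constantCoeff C = 1 ∧
    IsUnit A ∧ IsUnit B ∧ IsUnit C ∧
    Ring.inverse A = Ring.inverse B + Ring.inverse C - 1 := by
  intro A B C
  have achS : ∀ g : G, CGFP.Ach S g := CGFP.ach_of_gen hSsym hSgen
  have achT : ∀ h : H, CGFP.Ach T h := CGFP.ach_of_gen hTsym hTgen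
  have hA : A = CGFP.E S T Set.univ := CGFP.E_cgs
  have hB : B = CGFP.E S T (Set.range (Monoid.Coprod.inl : G → Monoid.Coprod G H)) :=
    CGFP.B_eq hSfin achS achT
  have hC : C = CGFP.E S T (Set.range (Monoid.Coprod.inr : H → Monoid.Coprod G H)) :=
    CGFP.C_eq hTfin achS achT
  have hBQ := CGFP.BQ_eq hSfin hTfin achS achT
  have hCQ := CGFP.CQ_eq hSfin hTfin achS achT
  have cA : PowerSeries.constantCoeff A = 1 := by
    rw [hA]; exact CGFP.E_constantCoeff achS achT (Set.mem_univ _)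
  have cB : PowerSeries.constantCoeff B = 1 := by
    rw [hB]; exact CGFP.E_constantCoeff achS achT ⟨1, map_one _⟩
  have cC : PowerSeries.constantCoeff C = 1 := by
    rw [hC]; exact CGFP.E_constantCoeff achS achT ⟨1, map_one _⟩
  have uB : IsUnit B := PowerSeries.isUnit_iff_constantCoeff.2 (by rw [cB]; exact isUnit_one)
  have uC : IsUnit C := PowerSeries.isUnit_iff_constantCoeff.2 (by rw [cC]; exact isUnit_one)
  have uQY : IsUnit (CGFP.E S T ({(1 : Monoid.Coprod G H)} ∪ CGFP.SY G H)) :=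
    PowerSeries.isUnit_iff_constantCoeff.2
      (by rw [CGFP.E_constantCoeff achS achT (Or.inl rfl)]; exact isUnit_one)
  have uA : IsUnit A := by
    rw [hA, ← hBQ]
    exact (hB ▸ uB).mul uQY
  refine ⟨cA, cB, cC, uA, uB, uC, ?_⟩
  have hDA : (Ring.inverse B + Ring.inverse C - 1) * A = 1 := by
    rw [sub_mul, add_mul, one_mul]
    have h1 : Ring.inverse B * A = CGFP.E S T ({(1 : Monoid.Coprod G H)} ∪ CGFP.SY G H) := by
      rw [hA, ← hBQ, ← hB, ← mul_assoc, Ring.inverse_mul_cancel _ uB, one_mul]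
    have h2 : Ring.inverse C * A = CGFP.E S T ({(1 : Monoid.Coprod G H)} ∪ CGFP.SX G H) := by
      rw [hA, ← hCQ, ← hC, ← mul_assoc, Ring.inverse_mul_cancel _ uC, one_mul]
    rw [h1, h2, CGFP.E_QY_eq hSfin hTfin achS achT, CGFP.E_QX_eq hSfin hTfin achS achT, hA,
      CGFP.E_univ_eq hSfin hTfin achS achT]
    abel
  obtain ⟨u, hu⟩ := uA
  rw [← hu, Ring.inverse_unit]
  exact (Units.eq_inv_of_mul_eq_one_right (by rw [hu]; exact hDA)).symm
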